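/- Let I ⊆ ℝ be an open interval, k ≥ 1, ε > 0, and let N : I → Mat_{k×k}(ℝ) be a differentiable family of symmetric matrices such that the operator norm of N′(t) − Id is at most ε for every t ∈ I. Suppose t₁, t₂ ∈ I with t₁ ≠ t₂, and let w, v ∈ ℝᵏ be unit vectors with N(t₁)·w = 0 and N(t₂)·v = 0. Then |⟨w, v⟩| ≤ ε. -/

import Mathlib

open scoped RealInnerProductSpace

lemma clm_inner (k : ℕ) (M : Matrix (Fin k) (Fin k) ℝ) (x y : EuclideanSpace ℝ (Fin k)) :
    (inner ℝ (Matrix.toEuclideanCLM (n := Fin k) (𝕜 := ℝ) M x) y : ℝ)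
      = ∑ i, (∑ j, M i j * x j) * y i := by
  rw [PiLp.inner_apply]
  refine Finset.sum_congr rfl fun i _ => ?_
  have h := congrFun (Matrix.ofLp_toEuclideanCLM (n := Fin k) (𝕜 := ℝ) M x) i
  simp [Matrix.mulVec, dotProduct] at h ⊢
  exact mul_comm _ _

lemma stmt_7_aux (k : ℕ) (a b : ℝ)
    (N N' : ℝ → Matrix (Fin k) (Fin k) ℝ) (ε : ℝ)
    (hsymm : ∀ t ∈ Set.Ioo a b, (N t).IsSymm)
    (hderiv : ∀ t ∈ Set.Ioo a b, ∀ i j : Fin k,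
      HasDerivAt (fun s => N s i j) (N' t i j) t)
    (hnorm : ∀ t ∈ Set.Ioo a b,
      ‖Matrix.toEuclideanCLM (n := Fin k) (𝕜 := ℝ) (N' t - 1)‖ ≤ ε)
    (t₁ t₂ : ℝ) (ht₁ : t₁ ∈ Set.Ioo a b) (ht₂ : t₂ ∈ Set.Ioo a b)
    (hlt : t₁ < t₂)
    (w v : EuclideanSpace ℝ (Fin k)) (hw : ‖w‖ = 1) (hv : ‖v‖ = 1)
    (hNw : Matrix.toEuclideanCLM (n := Fin k) (𝕜 := ℝ) (N t₁) w = 0)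
    (hNv : Matrix.toEuclideanCLM (n := Fin k) (𝕜 := ℝ) (N t₂) v = 0) :
    |(inner ℝ w v : ℝ)| ≤ ε := by
  set G : ℝ → ℝ := fun t => ∑ i, (∑ j, N t i j * w j) * v i with hGdef
  have hG : ∀ t ∈ Set.Ioo a b,
      HasDerivAt G (∑ i, (∑ j, N' t i j * w j) * v i) t := by
    intro t ht
    exact HasDerivAt.fun_sum fun i _ =>
      (HasDerivAt.fun_sum fun j _ => (hderiv t ht i j).mul_const (w j)).mul_const (v i)
  have hsub : Set.Icc t₁ t₂ ⊆ Set.Ioo a b := Set.Icc_subset_Ioo ht₁.1 ht₂.2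
  have hcont : ContinuousOn G (Set.Icc t₁ t₂) := fun x hx =>
    ((hG x (hsub hx)).continuousAt).continuousWithinAt
  obtain ⟨c, hc, hceq⟩ := exists_hasDerivAt_eq_slope G _ hlt hcont
    (fun x hx => hG x (hsub (Set.Ioo_subset_Icc_self hx)))
  have hcmem : c ∈ Set.Ioo a b := hsub (Set.Ioo_subset_Icc_self hc)
  have hG1 : G t₁ = 0 := by
    have h := clm_inner k (N t₁) w v
    rw [hNw, inner_zero_left] at h
    exact h.symm
  have hG2 : G t₂ = 0 := by
    have h := clm_inner k (N t₂) v w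
    rw [hNv, inner_zero_left] at h
    have hs := hsymm t₂ ht₂
    calc G t₂ = ∑ i, ∑ j, N t₂ i j * w j * v i := by
          simp [hGdef, Finset.sum_mul]
      _ = ∑ j, ∑ i, N t₂ i j * w j * v i := Finset.sum_comm
      _ = ∑ i, (∑ j, N t₂ i j * v j) * w i := by
          refine Finset.sum_congr rfl fun i _ => ?_
          rw [Finset.sum_mul]
          refine Finset.sum_congr rfl fun j _ => ?_
          rw [hs.apply j i]
          ring
      _ = 0 := h.symm
  have hDc : (inner ℝ (Matrix.toEuclideanCLM (n := Fin k) (𝕜 := ℝ) (N' c) w) v : ℝ) = 0 := by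
    rw [clm_inner, hceq, hG1, hG2]
    simp
  set A := Matrix.toEuclideanCLM (n := Fin k) (𝕜 := ℝ) (N' c - 1) with hA
  have hAwv : (inner ℝ (A w) v : ℝ) = -(inner ℝ w v : ℝ) := by
    rw [hA, map_sub, map_one]
    rw [ContinuousLinearMap.sub_apply, ContinuousLinearMap.one_apply, inner_sub_left, hDc]
    ring
  calc |(inner ℝ w v : ℝ)| = |(inner ℝ (A w) v : ℝ)| := by rw [hAwv, abs_neg]
    _ ≤ ‖A w‖ * ‖v‖ := abs_real_inner_le_norm _ _
    _ ≤ (‖A‖ * ‖w‖) * ‖v‖ := by gcongr; exact A.le_opNorm w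
    _ = ‖A‖ := by rw [hw, hv]; ring
    _ ≤ ε := hnorm c hcmem

/-- Let `I = (a,b)` be an open interval and
`N : I → Mat_{k×k}(ℝ)` a differentiable family of symmetric matrices whose
derivative `N'` satisfies `‖N'(t) − Id‖ ≤ ε` in the operator norm for all
`t ∈ I`.  If `t₁ ≠ t₂` in `I` and `w, v` are unit vectors with
`N(t₁)·w = 0` and `N(t₂)·v = 0`, then `|⟨w, v⟩| ≤ ε`. -/
theorem stmt_7 (k : ℕ) (hk : 1 ≤ k) (a b : ℝ)
    (N N' : ℝ → Matrix (Fin k) (Fin k) ℝ) (ε : ℝ)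
    (hsymm : ∀ t ∈ Set.Ioo a b, (N t).IsSymm)
    (hderiv : ∀ t ∈ Set.Ioo a b, ∀ i j : Fin k,
      HasDerivAt (fun s => N s i j) (N' t i j) t)
    (hnorm : ∀ t ∈ Set.Ioo a b,
      ‖Matrix.toEuclideanCLM (n := Fin k) (𝕜 := ℝ) (N' t - 1)‖ ≤ ε)
    (t₁ t₂ : ℝ) (ht₁ : t₁ ∈ Set.Ioo a b) (ht₂ : t₂ ∈ Set.Ioo a b)
    (hne : t₁ ≠ t₂)
    (w v : EuclideanSpace ℝ (Fin k)) (hw : ‖w‖ = 1) (hv : ‖v‖ = 1)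
    (hNw : Matrix.toEuclideanCLM (n := Fin k) (𝕜 := ℝ) (N t₁) w = 0)
    (hNv : Matrix.toEuclideanCLM (n := Fin k) (𝕜 := ℝ) (N t₂) v = 0) :
    |(inner ℝ w v : ℝ)| ≤ ε := by
  rcases hne.lt_or_gt with h | h
  · exact stmt_7_aux k a b N N' ε hsymm hderiv hnorm t₁ t₂ ht₁ ht₂ h w v hw hv hNw hNv
  · rw [real_inner_comm]
    exact stmt_7_aux k a b N N' ε hsymm hderiv hnorm t₂ t₁ ht₂ ht₁ h v w hv hw hNv hNw
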